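/- Let 𝔩 be an elliptic polynomial of degree d on ℚ_p^N and m, α > 0. For every g in the weighted Sobolev space ℋ(l) (l ∈ ℕ), the function u defined by û(ξ) = ĝ(ξ)/(|𝔩(ξ)|_p^α + m²) belongs to ℋ(l+d) and satisfies ‖u‖_{l+d} ≤ C' ‖g‖_l for a constant C' independent of g. In particular the Klein–Gordon-type equation (L_α + m²)u = g, with L_α u = F⁻¹(|𝔩|_p^α F u), has a unique solution u ∈ ∩_l ℋ(l) for each g ∈ ∩_l ℋ(l). -/

import Mathlib

open MeasureTheory Filter
open scoped ENNReal NNReal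

noncomputable section

def FT {p N : ℕ} [Fact p.Prime] [MeasurableSpace (Fin N → ℚ_[p])]
    (μ : Measure (Fin N → ℚ_[p]))
    (B : (Fin N → ℚ_[p]) →ₗ[ℚ_[p]] (Fin N → ℚ_[p]) →ₗ[ℚ_[p]] ℚ_[p])
    (χ : AddChar ℚ_[p] ℂ) (f : (Fin N → ℚ_[p]) → ℂ) : (Fin N → ℚ_[p]) → ℂ :=
  fun ξ => ∫ x, f x * χ (B x ξ) ∂μ

def sobolevNormSq {p N : ℕ} [Fact p.Prime] [MeasurableSpace (Fin N → ℚ_[p])]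
    (μ : Measure (Fin N → ℚ_[p])) (α : ℝ) (l : ℤ)
    (h : (Fin N → ℚ_[p]) → ℂ) : ℝ≥0∞ :=
  ∫⁻ ξ, ENNReal.ofReal ((max 1 ‖ξ‖) ^ (2 * α * (l : ℝ))) * (‖h ξ‖₊ : ℝ≥0∞) ^ 2 ∂μ

def sobolevNorm {p N : ℕ} [Fact p.Prime] [MeasurableSpace (Fin N → ℚ_[p])]
    (μ : Measure (Fin N → ℚ_[p])) (α : ℝ) (l : ℤ)
    (h : (Fin N → ℚ_[p]) → ℂ) : ℝ≥0∞ :=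
  (sobolevNormSq μ α l h) ^ (1 / 2 : ℝ)

def IsBruhatSchwartz {p N : ℕ} [Fact p.Prime] (f : (Fin N → ℚ_[p]) → ℂ) : Prop :=
  (∀ x : Fin N → ℚ_[p], ∃ l : ℤ, ∀ y : Fin N → ℚ_[p], ‖y‖ ≤ (p : ℝ) ^ l → f (x + y) = f x) ∧
    HasCompactSupport f

/-- A sequence is Cauchy in the Sobolev norm `‖·‖_l`. -/
def SobolevCauchy {p N : ℕ} [Fact p.Prime] [MeasurableSpace (Fin N → ℚ_[p])]
    (μ : Measure (Fin N → ℚ_[p])) (α : ℝ) (l : ℤ)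
    (F : ℕ → (Fin N → ℚ_[p]) → ℂ) : Prop :=
  ∀ ε : ℝ≥0∞, 0 < ε → ∃ K : ℕ, ∀ j k : ℕ, K ≤ j → K ≤ k →
    sobolevNorm μ α l (F j - F k) < ε

/-- `g` belongs to the Sobolev space `ℋ(l)`, the completion of the Bruhat–Schwartz
space with respect to `‖·‖_l`, viewed inside `L²`. -/
def MemSobolev {p N : ℕ} [Fact p.Prime] [MeasurableSpace (Fin N → ℚ_[p])]
    (μ : Measure (Fin N → ℚ_[p]))
    (B : (Fin N → ℚ_[p]) →ₗ[ℚ_[p]] (Fin N → ℚ_[p]) →ₗ[ℚ_[p]] ℚ_[p])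
    (χ : AddChar ℚ_[p] ℂ) (α : ℝ) (l : ℤ) (g : (Fin N → ℚ_[p]) → ℂ) : Prop :=
  MemLp g 2 μ ∧ ∃ F : ℕ → (Fin N → ℚ_[p]) → ℂ,
    (∀ n, IsBruhatSchwartz (F n)) ∧
    Tendsto (fun n => eLpNorm (F n - g) 2 μ) atTop (nhds 0) ∧
    SobolevCauchy μ α l (fun n => FT μ B χ (F n))

/-- `h` is the (distributional) Fourier transform of `g`:
`⟨h, φ⟩ = ⟨g, Fφ⟩` for every test function `φ`. -/
def IsFTOf {p N : ℕ} [Fact p.Prime] [MeasurableSpace (Fin N → ℚ_[p])]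
    (μ : Measure (Fin N → ℚ_[p]))
    (B : (Fin N → ℚ_[p]) →ₗ[ℚ_[p]] (Fin N → ℚ_[p]) →ₗ[ℚ_[p]] ℚ_[p])
    (χ : AddChar ℚ_[p] ℂ) (g h : (Fin N → ℚ_[p]) → ℂ) : Prop :=
  ∀ φ : (Fin N → ℚ_[p]) → ℂ, IsBruhatSchwartz φ →
    ∫ x, h x * φ x ∂μ = ∫ x, g x * FT μ B χ φ x ∂μ


open MvPolynomial in
theorem my_eval_smul {σ R : Type*} [Fintype σ] [CommSemiring R]
    (L : MvPolynomial σ R) {d : ℕ} (h : L.IsHomogeneous d) (c : R) (x : σ → R) :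
    MvPolynomial.eval (c • x) L = c ^ d * MvPolynomial.eval x L := by
  rw [MvPolynomial.eval_eq', MvPolynomial.eval_eq', Finset.mul_sum]
  refine Finset.sum_congr rfl fun mm hm => ?_
  have hdeg : mm.degree = d := by
    by_contra hc
    exact MvPolynomial.mem_support_iff.mp hm (h.coeff_eq_zero hc)
  have hsum : ∑ i, mm i = d := by
    rw [← hdeg]
    exact (Finset.sum_subset (Finset.subset_univ _)
      (fun i _ hi => Finsupp.notMem_support_iff.mp hi)).symm
  calc MvPolynomial.coeff mm L * ∏ i, (c • x) i ^ mm i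
      = MvPolynomial.coeff mm L * ∏ i, (c ^ mm i * x i ^ mm i) := by
        simp [mul_pow]
    _ = MvPolynomial.coeff mm L * (c ^ (∑ i, mm i) * ∏ i, x i ^ mm i) := by
        rw [Finset.prod_mul_distrib, Finset.prod_pow_eq_pow_sum]
    _ = c ^ d * (MvPolynomial.coeff mm L * ∏ i, x i ^ mm i) := by rw [hsum]; ring

theorem quot_sq_le (c rr a g : ℝ) (hc : 0 < c) (hrr : 0 < rr) (h : c * a ≤ rr)
    (ha : 0 ≤ a) (hg : 0 ≤ g) : a ^ 2 * (g / rr) ^ 2 ≤ (1 / c) ^ 2 * g ^ 2 := by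
  have h1 : a / rr ≤ 1 / c := (div_le_div_iff₀ hrr hc).mpr (by nlinarith)
  have h2 : (a / rr) ^ 2 ≤ (1 / c) ^ 2 := pow_le_pow_left₀ (by positivity) h1 2
  calc a ^ 2 * (g / rr) ^ 2 = (a / rr) ^ 2 * g ^ 2 := by
        field_simp
    _ ≤ (1 / c) ^ 2 * g ^ 2 := mul_le_mul_of_nonneg_right h2 (by positivity)

open MvPolynomial in
theorem ell_lower {p N : ℕ} [Fact p.Prime] (hN : 1 ≤ N) (d : ℕ)
    (L : MvPolynomial (Fin N) ℚ_[p]) (hhom : L.IsHomogeneous d)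
    (hell : ∀ ξ : Fin N → ℚ_[p], MvPolynomial.eval ξ L = 0 ↔ ξ = 0) :
    ∃ C₀ : ℝ, 0 < C₀ ∧ ∀ ξ : Fin N → ℚ_[p], ξ ≠ 0 →
      C₀ * ‖ξ‖ ^ d ≤ ‖MvPolynomial.eval ξ L‖ := by
  have hne : Nonempty (Fin N) := ⟨⟨0, hN⟩⟩
  have h1S : (fun _ : Fin N => (1 : ℚ_[p])) ∈ Metric.sphere (0 : Fin N → ℚ_[p]) 1 := by
    rw [mem_sphere_zero_iff_norm]
    simp [pi_norm_const]
  have hcont : Continuous fun x : Fin N → ℚ_[p] => ‖MvPolynomial.eval x L‖ :=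
    (MvPolynomial.continuous_eval (p := L)).norm
  obtain ⟨η₀, hη₀S, hmin⟩ := (isCompact_sphere (0 : Fin N → ℚ_[p]) 1).exists_isMinOn
    ⟨_, h1S⟩ hcont.continuousOn
  have hη₀norm : ‖η₀‖ = 1 := mem_sphere_zero_iff_norm.mp hη₀S
  have hη₀ne : η₀ ≠ 0 := by
    intro h; rw [h, norm_zero] at hη₀norm; exact one_ne_zero hη₀norm.symm
  refine ⟨‖MvPolynomial.eval η₀ L‖, ?_, ?_⟩
  · exact norm_pos_iff.mpr (fun h => hη₀ne ((hell η₀).mp h))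
  intro ξ hξ
  obtain ⟨i, -, hi⟩ := Finset.exists_mem_eq_sup (Finset.univ : Finset (Fin N))
    Finset.univ_nonempty (fun b => ‖ξ b‖₊)
  have hnorm_eq : ‖ξ‖ = ‖ξ i‖ := by
    rw [Pi.norm_def, hi]; rfl
  have hξpos : (0 : ℝ) < ‖ξ‖ := norm_pos_iff.mpr hξ
  have hξine : ξ i ≠ 0 := by
    intro h; rw [hnorm_eq, h, norm_zero] at hξpos; exact lt_irrefl 0 hξpos
  set c : ℚ_[p] := (ξ i)⁻¹ with hc
  have hcnorm : ‖c‖ = ‖ξ‖⁻¹ := by rw [hc, norm_inv, hnorm_eq]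
  have hηnorm : ‖c • ξ‖ = 1 := by
    rw [norm_smul, hcnorm, inv_mul_cancel₀ (ne_of_gt hξpos)]
  have hηS : c • ξ ∈ Metric.sphere (0 : Fin N → ℚ_[p]) 1 :=
    mem_sphere_zero_iff_norm.mpr hηnorm
  have hle : ‖MvPolynomial.eval η₀ L‖ ≤ ‖MvPolynomial.eval (c • ξ) L‖ := hmin hηS
  have heval : ‖MvPolynomial.eval (c • ξ) L‖ = ‖ξ‖⁻¹ ^ d * ‖MvPolynomial.eval ξ L‖ := by
    rw [my_eval_smul L hhom, norm_mul, norm_pow, hcnorm]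
  rw [heval] at hle
  have := mul_le_mul_of_nonneg_right hle (le_of_lt (pow_pos hξpos d))
  calc ‖MvPolynomial.eval η₀ L‖ * ‖ξ‖ ^ d
      ≤ ‖ξ‖⁻¹ ^ d * ‖MvPolynomial.eval ξ L‖ * ‖ξ‖ ^ d := this
    _ = ‖MvPolynomial.eval ξ L‖ := by
        rw [inv_pow, mul_comm _ (‖MvPolynomial.eval ξ L‖), mul_assoc,
          inv_mul_cancel₀ (pow_ne_zero d hξpos.ne'), mul_one]

/-- for an elliptic polynomial `𝔩` of degree `d` and `m, α > 0`: for every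
`g ∈ ℋ(l)` the function `u` with `û(ξ) = ĝ(ξ)/(|𝔩(ξ)|_p^α + m²)` belongs to `ℋ(l+d)` with
`‖u‖_{l+d} ≤ C'‖g‖_l`, and for `g ∈ ∩ℋ(l)` the equation `(L_α + m²)u = g` has a unique
solution `u ∈ ∩ℋ(l)` (expressed on the Fourier side: `(|𝔩|_p^α + m²)·û = ĝ`). -/
theorem stmt9 {p N : ℕ} [Fact p.Prime] (hN : 1 ≤ N)
    [MeasurableSpace (Fin N → ℚ_[p])] [BorelSpace (Fin N → ℚ_[p])]
    (μ : Measure (Fin N → ℚ_[p])) [μ.IsAddHaarMeasure]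
    (d : ℕ) (hd : 0 < d)
    (L : MvPolynomial (Fin N) ℚ_[p])
    (hcoeff : ∀ m, ‖MvPolynomial.coeff m L‖ ≤ 1)
    (hhom : L.IsHomogeneous d)
    (hell : ∀ ξ : Fin N → ℚ_[p], MvPolynomial.eval ξ L = 0 ↔ ξ = 0)
    (α : ℝ) (hα : 0 < α) (m : ℝ) (hm : 0 < m) :
    ∃ C' : ℝ≥0∞, 0 < C' ∧ C' < ⊤ ∧
      (∀ (l : ℕ) (gh : (Fin N → ℚ_[p]) → ℂ),
        sobolevNorm μ α (l + d)
            (fun ξ => gh ξ / ((‖MvPolynomial.eval ξ L‖ ^ α + m ^ 2 : ℝ) : ℂ)) ≤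
          C' * sobolevNorm μ α l gh) ∧
      (∀ gh : (Fin N → ℚ_[p]) → ℂ, (∀ l : ℕ, sobolevNormSq μ α l gh < ⊤) →
        ∃! uh : (Fin N → ℚ_[p]) → ℂ,
          (∀ ξ, ((‖MvPolynomial.eval ξ L‖ ^ α + m ^ 2 : ℝ) : ℂ) * uh ξ = gh ξ) ∧
          (∀ l : ℕ, sobolevNormSq μ α l uh < ⊤)) := by

  obtain ⟨C₀, hC₀, hC₀le⟩ := ell_lower hN d L hhom hell
  set r : (Fin N → ℚ_[p]) → ℝ := fun ξ => ‖MvPolynomial.eval ξ L‖ ^ α + m ^ 2 with hrdef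
  have hr : ∀ ξ, 0 < r ξ :=
    fun ξ => add_pos_of_nonneg_of_pos (Real.rpow_nonneg (norm_nonneg _) α) (by positivity)
  set c₀ : ℝ := min (m ^ 2) (C₀ ^ α) with hc₀def
  have hc₀ : 0 < c₀ := lt_min (by positivity) (Real.rpow_pos_of_pos hC₀ α)
  -- key lower bound
  have blower : ∀ ξ : Fin N → ℚ_[p], c₀ * (max 1 ‖ξ‖) ^ (α * (d : ℝ)) ≤ r ξ := by
    intro ξ
    rcases le_or_gt ‖ξ‖ 1 with h1 | h1
    · rw [max_eq_left h1, Real.one_rpow, mul_one]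
      have : c₀ ≤ m ^ 2 := min_le_left _ _
      have h2 : 0 ≤ ‖MvPolynomial.eval ξ L‖ ^ α := Real.rpow_nonneg (norm_nonneg _) α
      simp only [hrdef]; linarith
    · rw [max_eq_right h1.le]
      have hξ : ξ ≠ 0 := by
        intro h; rw [h, norm_zero] at h1; linarith
      have hC : C₀ * ‖ξ‖ ^ d ≤ ‖MvPolynomial.eval ξ L‖ := hC₀le ξ hξ
      have hξpos : (0 : ℝ) < ‖ξ‖ := by linarith
      have h1' : (C₀ * ‖ξ‖ ^ d) ^ α ≤ ‖MvPolynomial.eval ξ L‖ ^ α :=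
        Real.rpow_le_rpow (by positivity) hC hα.le
      have h2 : (C₀ * ‖ξ‖ ^ d) ^ α = C₀ ^ α * ‖ξ‖ ^ (α * (d : ℝ)) := by
        rw [Real.mul_rpow hC₀.le (by positivity), ← Real.rpow_natCast ‖ξ‖ d,
          ← Real.rpow_mul (norm_nonneg _), mul_comm (d : ℝ) α]
      have h3 : c₀ * ‖ξ‖ ^ (α * (d : ℝ)) ≤ C₀ ^ α * ‖ξ‖ ^ (α * (d : ℝ)) :=
        mul_le_mul_of_nonneg_right (min_le_right _ _) (Real.rpow_nonneg hξpos.le _)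
      have h4 : (0 : ℝ) < m ^ 2 := by positivity
      simp only [hrdef]
      rw [h2] at h1'
      linarith
  refine ⟨ENNReal.ofReal (1 / c₀), ENNReal.ofReal_pos.mpr (by positivity),
    ENNReal.ofReal_lt_top, ?_, ?_⟩
  · -- part 1
    intro l gh
    have hsq : sobolevNormSq μ α (l + d)
        (fun ξ => gh ξ / ((r ξ : ℝ) : ℂ)) ≤
        ENNReal.ofReal ((1 / c₀) ^ 2) * sobolevNormSq μ α l gh := by
      unfold sobolevNormSq
      have hpt : ∀ ξ : Fin N → ℚ_[p],
          ENNReal.ofReal ((max 1 ‖ξ‖) ^ (2 * α * (((l : ℤ) + (d : ℤ) : ℤ) : ℝ))) *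
            (‖gh ξ / ((r ξ : ℝ) : ℂ)‖₊ : ℝ≥0∞) ^ 2 ≤
          ENNReal.ofReal ((1 / c₀) ^ 2) *
            (ENNReal.ofReal ((max 1 ‖ξ‖) ^ (2 * α * ((l : ℤ) : ℝ))) *
              (‖gh ξ‖₊ : ℝ≥0∞) ^ 2) := by
        intro ξ
        set M : ℝ := max 1 ‖ξ‖ with hMdef
        have hM1 : (1 : ℝ) ≤ M := le_max_left _ _
        have hM0 : (0 : ℝ) < M := lt_of_lt_of_le one_pos hM1
        have conv : ∀ (t : ℝ) (z : ℂ), 0 ≤ t →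
            ENNReal.ofReal t * (‖z‖₊ : ℝ≥0∞) ^ 2 = ENNReal.ofReal (t * ‖z‖ ^ 2) := by
          intro t z ht
          rw [ENNReal.ofReal_mul ht, ENNReal.ofReal_pow (norm_nonneg z),
            ofReal_norm, enorm_eq_nnnorm]
        rw [conv _ _ (Real.rpow_nonneg hM0.le _), conv _ _ (Real.rpow_nonneg hM0.le _),
          ← ENNReal.ofReal_mul (by positivity)]
        apply ENNReal.ofReal_le_ofReal
        -- real inequality
        have hnorm : ‖gh ξ / ((r ξ : ℝ) : ℂ)‖ = ‖gh ξ‖ / r ξ := by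
          rw [norm_div, Complex.norm_real, Real.norm_eq_abs, abs_of_pos (hr ξ)]
        have hsplit : M ^ (2 * α * (((l : ℤ) + (d : ℤ) : ℤ) : ℝ)) =
            M ^ (2 * α * ((l : ℤ) : ℝ)) * (M ^ (α * (d : ℝ))) ^ 2 := by
          rw [sq, ← Real.rpow_add hM0, ← Real.rpow_add hM0]
          congr 1
          push_cast
          ring
        rw [hnorm, hsplit]
        calc M ^ (2 * α * ((l : ℤ) : ℝ)) * (M ^ (α * (d : ℝ))) ^ 2 * (‖gh ξ‖ / r ξ) ^ 2
            = M ^ (2 * α * ((l : ℤ) : ℝ)) *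
              ((M ^ (α * (d : ℝ))) ^ 2 * (‖gh ξ‖ / r ξ) ^ 2) := by ring
          _ ≤ M ^ (2 * α * ((l : ℤ) : ℝ)) * ((1 / c₀) ^ 2 * ‖gh ξ‖ ^ 2) := by
              refine mul_le_mul_of_nonneg_left ?_ (Real.rpow_nonneg hM0.le _)
              exact quot_sq_le c₀ (r ξ) (M ^ (α * (d : ℝ))) ‖gh ξ‖ hc₀ (hr ξ)
                (blower ξ) (Real.rpow_nonneg hM0.le _) (norm_nonneg _)
          _ = (1 / c₀) ^ 2 * (M ^ (2 * α * ((l : ℤ) : ℝ)) * ‖gh ξ‖ ^ 2) := by ring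
      calc ∫⁻ ξ, ENNReal.ofReal ((max 1 ‖ξ‖) ^ (2 * α * (((l : ℕ) + (d : ℕ) : ℤ) : ℝ))) *
            (‖gh ξ / ((r ξ : ℝ) : ℂ)‖₊ : ℝ≥0∞) ^ 2 ∂μ
          ≤ ∫⁻ ξ, ENNReal.ofReal ((1 / c₀) ^ 2) *
              (ENNReal.ofReal ((max 1 ‖ξ‖) ^ (2 * α * ((l : ℤ) : ℝ))) *
                (‖gh ξ‖₊ : ℝ≥0∞) ^ 2) ∂μ := lintegral_mono (fun ξ => hpt ξ)
        _ = ENNReal.ofReal ((1 / c₀) ^ 2) *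
              ∫⁻ ξ, ENNReal.ofReal ((max 1 ‖ξ‖) ^ (2 * α * ((l : ℤ) : ℝ))) *
                (‖gh ξ‖₊ : ℝ≥0∞) ^ 2 ∂μ :=
            lintegral_const_mul' _ _ ENNReal.ofReal_ne_top
    unfold sobolevNorm
    calc (sobolevNormSq μ α (l + d) fun ξ => gh ξ / ((r ξ : ℝ) : ℂ)) ^ (1 / 2 : ℝ)
        ≤ (ENNReal.ofReal ((1 / c₀) ^ 2) * sobolevNormSq μ α l gh) ^ (1 / 2 : ℝ) :=
          ENNReal.rpow_le_rpow hsq (by norm_num)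
      _ = ENNReal.ofReal (1 / c₀) * (sobolevNormSq μ α l gh) ^ (1 / 2 : ℝ) := by
          rw [ENNReal.mul_rpow_of_nonneg _ _ (by norm_num : (0:ℝ) ≤ 1/2)]
          congr 1
          rw [ENNReal.ofReal_pow (by positivity), ← ENNReal.rpow_natCast
            (ENNReal.ofReal (1 / c₀)) 2, ← ENNReal.rpow_mul]
          norm_num
  · -- part 2
    intro gh hfin
    refine ⟨fun ξ => gh ξ / ((r ξ : ℝ) : ℂ), ⟨?_, ?_⟩, ?_⟩
    · intro ξ
      rw [mul_comm, div_mul_cancel₀]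
      exact Complex.ofReal_ne_zero.mpr (ne_of_gt (hr ξ))
    · intro l
      have hsq : sobolevNormSq μ α l (fun ξ => gh ξ / ((r ξ : ℝ) : ℂ)) ≤
          ENNReal.ofReal ((1 / m ^ 2) ^ 2) * sobolevNormSq μ α l gh := by
        unfold sobolevNormSq
        have hpt : ∀ ξ : Fin N → ℚ_[p],
            ENNReal.ofReal ((max 1 ‖ξ‖) ^ (2 * α * ((l : ℤ) : ℝ))) *
              (‖gh ξ / ((r ξ : ℝ) : ℂ)‖₊ : ℝ≥0∞) ^ 2 ≤
            ENNReal.ofReal ((1 / m ^ 2) ^ 2) *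
              (ENNReal.ofReal ((max 1 ‖ξ‖) ^ (2 * α * ((l : ℤ) : ℝ))) *
                (‖gh ξ‖₊ : ℝ≥0∞) ^ 2) := by
          intro ξ
          set M : ℝ := max 1 ‖ξ‖ with hMdef
          have hM1 : (1 : ℝ) ≤ M := le_max_left _ _
          have hM0 : (0 : ℝ) < M := lt_of_lt_of_le one_pos hM1
          have conv : ∀ (t : ℝ) (z : ℂ), 0 ≤ t →
              ENNReal.ofReal t * (‖z‖₊ : ℝ≥0∞) ^ 2 = ENNReal.ofReal (t * ‖z‖ ^ 2) := by
            intro t z ht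
            rw [ENNReal.ofReal_mul ht, ENNReal.ofReal_pow (norm_nonneg z),
              ofReal_norm, enorm_eq_nnnorm]
          rw [conv _ _ (Real.rpow_nonneg hM0.le _), conv _ _ (Real.rpow_nonneg hM0.le _),
            ← ENNReal.ofReal_mul (by positivity)]
          apply ENNReal.ofReal_le_ofReal
          have hnorm : ‖gh ξ / ((r ξ : ℝ) : ℂ)‖ = ‖gh ξ‖ / r ξ := by
            rw [norm_div, Complex.norm_real, Real.norm_eq_abs, abs_of_pos (hr ξ)]
          have hm2 : m ^ 2 * 1 ≤ r ξ := by
            have := Real.rpow_nonneg (norm_nonneg (MvPolynomial.eval ξ L)) α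
            simp only [hrdef, mul_one]; linarith
          have key := quot_sq_le (m ^ 2) (r ξ) 1 ‖gh ξ‖ (by positivity) (hr ξ) hm2
            zero_le_one (norm_nonneg _)
          rw [one_pow, one_mul] at key
          rw [hnorm]
          calc M ^ (2 * α * ((l : ℤ) : ℝ)) * (‖gh ξ‖ / r ξ) ^ 2
              ≤ M ^ (2 * α * ((l : ℤ) : ℝ)) * ((1 / m ^ 2) ^ 2 * ‖gh ξ‖ ^ 2) :=
                mul_le_mul_of_nonneg_left key (Real.rpow_nonneg hM0.le _)
            _ = (1 / m ^ 2) ^ 2 * (M ^ (2 * α * ((l : ℤ) : ℝ)) * ‖gh ξ‖ ^ 2) := by ring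
        calc ∫⁻ ξ, ENNReal.ofReal ((max 1 ‖ξ‖) ^ (2 * α * ((l : ℤ) : ℝ))) *
              (‖gh ξ / ((r ξ : ℝ) : ℂ)‖₊ : ℝ≥0∞) ^ 2 ∂μ
            ≤ ∫⁻ ξ, ENNReal.ofReal ((1 / m ^ 2) ^ 2) *
                (ENNReal.ofReal ((max 1 ‖ξ‖) ^ (2 * α * ((l : ℤ) : ℝ))) *
                  (‖gh ξ‖₊ : ℝ≥0∞) ^ 2) ∂μ := lintegral_mono (fun ξ => hpt ξ)
          _ = ENNReal.ofReal ((1 / m ^ 2) ^ 2) *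
                ∫⁻ ξ, ENNReal.ofReal ((max 1 ‖ξ‖) ^ (2 * α * ((l : ℤ) : ℝ))) *
                  (‖gh ξ‖₊ : ℝ≥0∞) ^ 2 ∂μ :=
              lintegral_const_mul' _ _ ENNReal.ofReal_ne_top
      exact lt_of_le_of_lt hsq (ENNReal.mul_lt_top ENNReal.ofReal_lt_top (hfin l))
    · rintro vh ⟨heq, -⟩
      funext ξ
      rw [eq_div_iff (Complex.ofReal_ne_zero.mpr (ne_of_gt (hr ξ))), mul_comm]
      exact heq ξ

end
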